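/- If there exists a Hadamard matrix of size u ≥ 1, then there exist Naimark-complementary real flat ETFs with parameters (d,n) = (u(2u−1), 4u²) and (u(2u+1), 4u²); in particular both are Hadamard ETFs (each is a submatrix of a 4u²×4u² real Hadamard matrix). -/

import Mathlib

set_option linter.unusedSectionVars false
set_option linter.unreachableTactic false
set_option linter.unusedTactic false
set_option maxHeartbeats 1000000
open Matrix Finset

namespace KETF

abbrev X (u : ℕ) := Option (ZMod (2*u - 1))

def Fm : Matrix (Fin 2) (Fin 2) ℝ := !![1,1;1,-1]

lemma Fm_pm : ∀ i j, Fm i j = 1 ∨ Fm i j = -1 := by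
  intro i j; fin_cases i <;> fin_cases j <;> norm_num [Fm]

lemma Frow : ∀ a b : Fin 2, ∑ q : Fin 2, Fm a q * Fm b q = if a = b then 2 else 0 := by
  intro a b; fin_cases a <;> fin_cases b <;> norm_num [Fm, Fin.sum_univ_two]

lemma pm_mul {a b : ℝ} (ha : a = 1 ∨ a = -1) (hb : b = 1 ∨ b = -1) :
    a * b = 1 ∨ a * b = -1 := by rcases ha with rfl|rfl <;> rcases hb with rfl|rfl <;> norm_num

lemma sum_neg_eq_zero {α : Type*} [Fintype α] (f : α → ℝ) (e : α → α)
    (he : Function.Bijective e) (h : ∀ x, f (e x) = - f x) : ∑ x, f x = 0 := by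
  have h1 : ∑ x, f (e x) = ∑ x, f x := he.sum_comp f
  have h2 : ∑ x, f (e x) = -∑ x, f x := by
    rw [← Finset.sum_neg_distrib]; exact Finset.sum_congr rfl fun x _ => h x
  linarith

section Main

variable (u : ℕ) [NeZero (2*u - 1)]

lemma u_pos : 0 < u := by
  rcases Nat.eq_zero_or_pos u with h | h
  · exact absurd (by omega : 2*u-1 = 0) (NeZero.ne (2*u-1))
  · exact h

lemma cardX : Fintype.card (X u) = 2*u := by
  have := u_pos u
  have : (2*u-1) + 1 = 2*u := by omega
  simp [X, Fintype.card_option, ZMod.card]; omega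

lemma two_unit : IsUnit (2 : ZMod (2*u-1)) := by
  have h2 : ((2:ℕ) : ZMod (2*u-1)) = 2 := by push_cast; ring
  rw [← h2, ZMod.isUnit_iff_coprime]
  have : Odd (2*u-1) := ⟨u-1, by have := u_pos u; omega⟩
  rwa [Nat.coprime_two_left]


noncomputable def eX : X u ≃ Fin u × Fin 2 :=
  Fintype.equivOfCardEq (by rw [cardX]; simp [Fintype.card_prod]; ring)

variable (H : Matrix (Fin u) (Fin u) ℝ)

noncomputable def K (x y : X u) : ℝ :=
  H (eX u x).1 (eX u y).1 * Fm (eX u x).2 (eX u y).2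

lemma K_pm (hH1 : ∀ i j, H i j = 1 ∨ H i j = -1) (x y : X u) :
    K u H x y = 1 ∨ K u H x y = -1 :=
  pm_mul (hH1 _ _) (Fm_pm _ _)

lemma Hrow (hH2 : H * H.transpose = (u : ℝ) • 1) (a b : Fin u) :
    ∑ p, H a p * H b p = if a = b then (u:ℝ) else 0 := by
  have := congrFun (congrFun hH2 a) b
  simpa [Matrix.mul_apply, Matrix.transpose_apply, Matrix.smul_apply, Matrix.one_apply] using this

lemma Krow (hH2 : H * H.transpose = (u : ℝ) • 1) (a b : X u) :
    ∑ x, K u H a x * K u H b x = if a = b then (2*u : ℝ) else 0 := by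
  have h1 : ∑ x, K u H a x * K u H b x
      = ∑ p : Fin u × Fin 2, K u H a ((eX u).symm p) * K u H b ((eX u).symm p) :=
    (Equiv.sum_comp (eX u).symm _).symm
  rw [h1]
  have h2 : ∀ p : Fin u × Fin 2,
      K u H a ((eX u).symm p) * K u H b ((eX u).symm p)
      = (H (eX u a).1 p.1 * H (eX u b).1 p.1) * (Fm (eX u a).2 p.2 * Fm (eX u b).2 p.2) := by
    intro p; simp only [K, Equiv.apply_symm_apply]; ring
  rw [Finset.sum_congr rfl (fun p _ => h2 p), Fintype.sum_prod_type]
  simp only [← Finset.mul_sum, ← Finset.sum_mul]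
  rw [Frow, Hrow u H hH2]
  by_cases hab : a = b
  · subst hab; simp; ring
  · have : ¬ ((eX u a).1 = (eX u b).1 ∧ (eX u a).2 = (eX u b).2) := by
      intro ⟨h1', h2'⟩
      exact hab ((eX u).injective (Prod.ext h1' h2'))
    rcases Decidable.not_and_iff_or_not.mp this with h | h
    · simp [h, if_neg hab]
    · simp [h, if_neg hab]


/-! ### Round-robin matchings -/

def mu (s : ZMod (2*u-1)) : X u → X u
  | none => some s
  | some x => if x = s then none else some (2*s - x)

lemma two_cancel {a b : ZMod (2*u-1)} (h : 2*a = 2*b) : a = b :=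
  (two_unit u).mul_left_cancel h

lemma mu_invol (s : ZMod (2*u-1)) : Function.Involutive (mu u s) := by
  intro x
  match x with
  | none => simp [mu]
  | some x =>
    by_cases hx : x = s
    · simp [mu, hx]
    · have h1 : ¬ (2*s - x = s) := by
        intro h; exact hx (by linear_combination -h)
      simp [mu, hx, h1]

lemma mu_ne (s : ZMod (2*u-1)) (x : X u) : mu u s x ≠ x := by
  match x with
  | none => simp [mu]
  | some x =>
    by_cases hx : x = s
    · simp [mu, hx]
    · simp only [mu, if_neg hx, ne_eq, Option.some.injEq]
      intro h
      exact hx (two_cancel u (by linear_combination h)).symm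

lemma mu_disj {s t : ZMod (2*u-1)} (hst : s ≠ t) (x : X u) : mu u s x ≠ mu u t x := by
  match x with
  | none => simpa [mu] using hst
  | some x =>
    by_cases hxs : x = s <;> by_cases hxt : x = t
    · exact absurd (hxs ▸ hxt) hst
    · simp [mu, hxs, hxt, hst]
    · simp [mu, hxs, hxt, Ne.symm hst]
    · simp only [mu, if_neg hxs, if_neg hxt, ne_eq, Option.some.injEq]
      intro h
      exact hst (two_cancel u (by linear_combination h))

/-! ### Edge labels and orientation -/

def iotaN (s : ZMod (2*u-1)) : X u → ℕ
  | none => 0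
  | some x => if x = s then 0 else min (x-s).val (2*u-1-(x-s).val)

lemma val_facts {δ : ZMod (2*u-1)} (hδ : δ ≠ 0) : 1 ≤ δ.val ∧ δ.val < 2*u-1 := by
  constructor
  · rcases Nat.eq_zero_or_pos δ.val with h | h
    · exact absurd ((ZMod.val_eq_zero δ).mp h) hδ
    · exact h
  · exact ZMod.val_lt δ

lemma iotaN_lt (s : ZMod (2*u-1)) (c : X u) : iotaN u s c < u := by
  have hu := u_pos u
  match c with
  | none => simpa [iotaN]
  | some x =>
    by_cases hx : x = s
    · simpa [iotaN, hx]
    · have := val_facts u (sub_ne_zero_of_ne hx)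
      simp only [iotaN, if_neg hx]
      omega

noncomputable def ifin (s : ZMod (2*u-1)) (c : X u) : Fin u :=
  ⟨iotaN u s c % u, Nat.mod_lt _ (u_pos u)⟩

lemma ifin_val (s : ZMod (2*u-1)) (c : X u) : (ifin u s c).val = iotaN u s c :=
  Nat.mod_eq_of_lt (iotaN_lt u s c)

lemma val_neg' {δ : ZMod (2*u-1)} (hδ : δ ≠ 0) : (-δ).val = 2*u-1 - δ.val := by
  haveI : NeZero δ := ⟨hδ⟩
  exact ZMod.val_neg_of_ne_zero δ

lemma sub_swap_ne {x s : ZMod (2*u-1)} (hx : x ≠ s) : 2*s - x ≠ s := by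
  intro h; exact hx (by linear_combination -h)

lemma iota_mu (s : ZMod (2*u-1)) (c : X u) : iotaN u s (mu u s c) = iotaN u s c := by
  match c with
  | none => simp [iotaN, mu]
  | some x =>
    by_cases hx : x = s
    · simp [iotaN, mu, hx]
    · have hδ := sub_ne_zero_of_ne hx
      have hf := val_facts u hδ
      have h1 : (2*s - x) - s = -(x - s) := by ring
      simp only [mu, if_neg hx, iotaN, if_neg (sub_swap_ne u hx), h1, val_neg' u hδ]
      omega

noncomputable def osign (s : ZMod (2*u-1)) : X u → ℝ
  | none => 1
  | some x => if x = s then -1 else (if (x-s).val < u then 1 else -1)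

lemma osign_pm (s : ZMod (2*u-1)) (c : X u) : osign u s c = 1 ∨ osign u s c = -1 := by
  match c with
  | none => left; rfl
  | some x =>
    simp only [osign]
    split
    · right; rfl
    · split
      · left; rfl
      · right; rfl

lemma osign_mu (s : ZMod (2*u-1)) (c : X u) : osign u s (mu u s c) = - osign u s c := by
  have hu := u_pos u
  match c with
  | none => simp [osign, mu]
  | some x =>
    by_cases hx : x = s
    · simp [osign, mu, hx]
    · have hδ := sub_ne_zero_of_ne hx
      have hf := val_facts u hδ
      have h1 : (2*s - x) - s = -(x - s) := by ring
      simp only [mu, if_neg hx, osign, if_neg (sub_swap_ne u hx), h1, val_neg' u hδ]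
      by_cases hv : (x-s).val < u
      · rw [if_pos hv, if_neg (by omega)]
      · rw [if_neg hv, if_pos (by omega)]; norm_num


/-! ### The 2-to-1 structure of edge labels -/

def bmap (s : ZMod (2*u-1)) : Fin u × Bool → X u := fun p =>
  if p.1.val = 0 then (if p.2 then some s else none)
  else some (s + (if p.2 then -(p.1.val : ZMod (2*u-1)) else (p.1.val : ZMod (2*u-1))))

lemma cast_val_small (i : Fin u) : ((i.val : ZMod (2*u-1))).val = i.val := by
  have hu := u_pos u
  exact ZMod.val_cast_of_lt (by omega)

lemma cast_ne_zero {i : Fin u} (hi : i.val ≠ 0) : (i.val : ZMod (2*u-1)) ≠ 0 := by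
  intro h
  have := congrArg ZMod.val h
  rw [cast_val_small] at this
  simp at this; omega

lemma bmap_iota (s : ZMod (2*u-1)) (p : Fin u × Bool) :
    iotaN u s (bmap u s p) = p.1.val := by
  have hu := u_pos u
  obtain ⟨i, bl⟩ := p
  by_cases hi : i.val = 0
  · cases bl <;> simp [bmap, iotaN, hi]
  · have hne : (i.val : ZMod (2*u-1)) ≠ 0 := cast_ne_zero u hi
    have hval := cast_val_small u i
    have hilt := i.isLt
    cases bl
    · have hxs : s + (i.val : ZMod (2*u-1)) ≠ s := by
        intro h; exact hne (by linear_combination h)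
      have hsub : s + (i.val : ZMod (2*u-1)) - s = (i.val : ZMod (2*u-1)) := by ring
      simp only [bmap, if_neg hi, if_neg, Bool.false_eq_true, if_false, iotaN,
        if_neg hxs, hsub, hval]
      omega
    · have hnegne : -(i.val : ZMod (2*u-1)) ≠ 0 := by simpa using hne
      have hxs : s + -(i.val : ZMod (2*u-1)) ≠ s := by
        intro h; exact hnegne (by linear_combination h)
      have hsub : s + -(i.val : ZMod (2*u-1)) - s = -(i.val : ZMod (2*u-1)) := by ring
      simp only [bmap, if_neg hi, if_true, iotaN, if_neg hxs, hsub,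
        val_neg' u hne, hval]
      omega

lemma bmap_bij (s : ZMod (2*u-1)) : Function.Bijective (bmap u s) := by
  have hu := u_pos u
  rw [Fintype.bijective_iff_injective_and_card]
  constructor
  · rintro ⟨i, bi⟩ ⟨j, bj⟩ h
    have key : ∀ (i j : Fin u), i.val ≠ 0 → j.val ≠ 0 →
        ((i.val : ZMod (2*u-1)) = -(j.val : ZMod (2*u-1)) → False) := by
      intro i j hi hj hcast
      have h1 : ((i.val : ZMod (2*u-1)) + (j.val : ZMod (2*u-1))).val = 0 := by
        rw [hcast]; simp
      have h2 : (i.val : ZMod (2*u-1)) + (j.val : ZMod (2*u-1))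
          = ((i.val + j.val : ℕ) : ZMod (2*u-1)) := by push_cast; ring
      rw [h2, ZMod.val_cast_of_lt (by omega)] at h1
      omega
    have vEq : ∀ (i j : Fin u), i.val ≠ 0 → j.val ≠ 0 →
        ((i.val : ZMod (2*u-1)) = (j.val : ZMod (2*u-1)) → i = j) := by
      intro i j hi hj hc
      have := congrArg ZMod.val hc
      rw [cast_val_small, cast_val_small] at this
      exact Fin.ext this
    by_cases hi : i.val = 0 <;> by_cases hj : j.val = 0
    · cases bi <;> cases bj <;> simp [bmap, hi, hj] at h ⊢ <;> exact Fin.ext (by omega)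
    · exfalso; cases bi <;> cases bj <;> simp [bmap, hi, hj] at h <;>
        first
          | exact cast_ne_zero u hj h
          | exact cast_ne_zero u hj (neg_eq_zero.mp h)
          | exact cast_ne_zero u hi h
          | exact cast_ne_zero u hi (neg_eq_zero.mp h)
    · exfalso; cases bi <;> cases bj <;> simp [bmap, hi, hj] at h <;>
        first
          | exact cast_ne_zero u hj h
          | exact cast_ne_zero u hj (neg_eq_zero.mp h)
          | exact cast_ne_zero u hi h
          | exact cast_ne_zero u hi (neg_eq_zero.mp h)
    · cases bi <;> cases bj <;> simp only [bmap, if_neg hi, if_neg hj,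
        Bool.false_eq_true, if_false, if_true, Option.some.injEq, add_right_inj] at h
      · exact Prod.ext (vEq i j hi hj h) rfl
      · exact absurd h (fun hh => key i j hi hj hh)
      · exact absurd h.symm (fun hh => key j i hj hi hh)
      · exact Prod.ext (vEq i j hi hj (neg_inj.mp h)) rfl
  · rw [cardX]; simp; omega

lemma sum_ifin (s : ZMod (2*u-1)) (G : Fin u → ℝ) :
    ∑ c : X u, G (ifin u s c) = 2 * ∑ w, G w := by
  rw [← (bmap_bij u s).sum_comp (fun c => G (ifin u s c))]
  have h1 : ∀ p : Fin u × Bool, ifin u s (bmap u s p) = p.1 := by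
    intro p; apply Fin.ext; rw [ifin_val, bmap_iota]
  rw [Finset.sum_congr rfl (fun p _ => by rw [h1 p])]
  rw [Fintype.sum_prod_type]
  simp [Finset.mul_sum, two_mul]

lemma bmap_osign (s : ZMod (2*u-1)) (p : Fin u × Bool) :
    osign u s (bmap u s p) = if p.2 then -1 else 1 := by
  have hu := u_pos u
  obtain ⟨i, bl⟩ := p
  by_cases hi : i.val = 0
  · cases bl <;> simp [bmap, osign, hi]
  · have hne : (i.val : ZMod (2*u-1)) ≠ 0 := cast_ne_zero u hi
    have hval := cast_val_small u i
    have hilt := i.isLt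
    cases bl
    · have hxs : s + (i.val : ZMod (2*u-1)) ≠ s := by
        intro h; exact hne (by linear_combination h)
      have hsub : s + (i.val : ZMod (2*u-1)) - s = (i.val : ZMod (2*u-1)) := by ring
      simp only [bmap, if_neg hi, Bool.false_eq_true, if_false, osign, if_neg hxs, hsub, hval]
      rw [if_pos (by omega)]
    · have hnegne : -(i.val : ZMod (2*u-1)) ≠ 0 := by simpa using hne
      have hxs : s + -(i.val : ZMod (2*u-1)) ≠ s := by
        intro h; exact hnegne (by linear_combination h)
      have hsub : s + -(i.val : ZMod (2*u-1)) - s = -(i.val : ZMod (2*u-1)) := by ring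
      simp only [bmap, if_neg hi, if_true, osign, if_neg hxs, hsub, val_neg' u hne, hval]
      rw [if_neg (by omega)]


/-! ### Rows -/

noncomputable def rowOf (pi : X u → X u) (g : X u → ℝ) : X u × X u → ℝ :=
  fun p => g p.1 * K u H (pi p.1) p.2

noncomputable def Rm : X u × X u → X u × X u → ℝ :=
  fun p q => -(K u H p.1 q.2 * K u H q.1 p.2)

lemma Rm_pm (hH1 : ∀ i j, H i j = 1 ∨ H i j = -1) (p q : X u × X u) :
    Rm u H p q = 1 ∨ Rm u H p q = -1 := by
  rcases pm_mul (K_pm u H hH1 p.1 q.2) (K_pm u H hH1 q.1 p.2) with h | h <;>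
    simp [Rm, h]

lemma inner_rowOf (hH2 : H * H.transpose = (u : ℝ) • 1) (pi pi' : X u → X u)
    (g g' : X u → ℝ) :
    ∑ p : X u × X u, rowOf u H pi g p * rowOf u H pi' g' p
      = ∑ c, (g c * g' c) * (if pi c = pi' c then (2*u : ℝ) else 0) := by
  rw [Fintype.sum_prod_type]
  refine Finset.sum_congr rfl fun c _ => ?_
  have : ∀ d, rowOf u H pi g (c, d) * rowOf u H pi' g' (c, d)
      = (g c * g' c) * (K u H (pi c) d * K u H (pi' c) d) := by
    intro d; simp only [rowOf]; ring
  rw [Finset.sum_congr rfl fun d _ => this d, ← Finset.mul_sum, Krow u H hH2]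

lemma eig_rowOf (hH2 : H * H.transpose = (u : ℝ) • 1) (pi : X u → X u) (g : X u → ℝ)
    (hpi : Function.Involutive pi) (eps : ℝ) (hg : ∀ c, g (pi c) = eps * g c)
    (q : X u × X u) :
    ∑ p : X u × X u, rowOf u H pi g p * Rm u H p q
      = -((2*u : ℝ) * eps) * rowOf u H pi g q := by
  rw [Fintype.sum_prod_type]
  have hc : ∀ c, ∑ d, rowOf u H pi g (c, d) * Rm u H (c, d) q
      = -(g c * K u H c q.2) * (if pi c = q.1 then (2*u:ℝ) else 0) := by
    intro c
    have : ∀ d, rowOf u H pi g (c, d) * Rm u H (c, d) q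
        = -(g c * K u H c q.2) * (K u H (pi c) d * K u H q.1 d) := by
      intro d; simp only [rowOf, Rm]; ring
    rw [Finset.sum_congr rfl fun d _ => this d, ← Finset.mul_sum, Krow u H hH2]
  rw [Finset.sum_congr rfl fun c _ => hc c]
  have hiff : ∀ c : X u, (pi c = q.1) = (c = pi q.1) := by
    intro c
    apply propext
    constructor
    · intro h; rw [← h, hpi]
    · intro h; rw [h, hpi]
  simp only [hiff, mul_ite, mul_zero, Finset.sum_ite_eq', Finset.mem_univ, if_true]
  rw [hg q.1, rowOf]
  ring

/-! ### The row families -/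

noncomputable def rowPhi (p : ZMod (2*u-1) × Fin u) : X u × X u → ℝ :=
  rowOf u H (mu u p.1) (fun c => osign u p.1 c * H p.2 (ifin u p.1 c))

noncomputable def rowPsi (q : X u ⊕ (ZMod (2*u-1) × Fin u)) : X u × X u → ℝ :=
  match q with
  | Sum.inl a => rowOf u H id (fun c => K u H a c)
  | Sum.inr p => rowOf u H (mu u p.1) (fun c => H p.2 (ifin u p.1 c))

lemma rowPhi_pm (hH1 : ∀ i j, H i j = 1 ∨ H i j = -1) (p) (y) :
    rowPhi u H p y = 1 ∨ rowPhi u H p y = -1 :=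
  pm_mul (pm_mul (osign_pm u _ _) (hH1 _ _)) (K_pm u H hH1 _ _)

lemma rowPsi_pm (hH1 : ∀ i j, H i j = 1 ∨ H i j = -1) (q) (y) :
    rowPsi u H q y = 1 ∨ rowPsi u H q y = -1 := by
  match q with
  | Sum.inl a => exact pm_mul (K_pm u H hH1 _ _) (K_pm u H hH1 _ _)
  | Sum.inr p => exact pm_mul (hH1 _ _) (K_pm u H hH1 _ _)

/-! ### Orthogonality -/

lemma sum_H_ifin (hH2 : H * H.transpose = (u : ℝ) • 1) (s : ZMod (2*u-1)) (e e' : Fin u) :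
    ∑ c : X u, H e (ifin u s c) * H e' (ifin u s c) = if e = e' then (2*u:ℝ) else 0 := by
  rw [sum_ifin u s (fun w => H e w * H e' w), Hrow u H hH2]
  by_cases h : e = e' <;> simp [h] <;> ring

lemma orth_PhiPhi (hH2 : H * H.transpose = (u : ℝ) • 1) (p p' : ZMod (2*u-1) × Fin u) :
    ∑ y : X u × X u, rowPhi u H p y * rowPhi u H p' y
      = if p = p' then (4*u^2 : ℝ) else 0 := by
  obtain ⟨s, e⟩ := p; obtain ⟨s', e'⟩ := p'
  rw [rowPhi, rowPhi, inner_rowOf u H hH2]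
  by_cases hs : s = s'
  · subst hs
    have hterm : ∀ c : X u,
        (osign u s c * H e (ifin u s c) * (osign u s c * H e' (ifin u s c))) *
          (if mu u s c = mu u s c then (2*u:ℝ) else 0)
        = (2*u:ℝ) * (H e (ifin u s c) * H e' (ifin u s c)) := by
      intro c
      rcases osign_pm u s c with h | h <;> simp [h] <;> ring
    rw [Finset.sum_congr rfl fun c _ => hterm c, ← Finset.mul_sum, sum_H_ifin u H hH2]
    by_cases he : e = e' <;> simp [he, Prod.ext_iff] <;> ring
  · have : ∀ c : X u, (mu u s c = mu u s' c) = False := by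
      intro c; simp [mu_disj u hs c]
    simp only [this, if_false, mul_zero, Finset.sum_const_zero]
    rw [if_neg (by simp [Prod.ext_iff, hs])]

lemma orth_PsiPsi (hH2 : H * H.transpose = (u : ℝ) • 1)
    (q q' : X u ⊕ (ZMod (2*u-1) × Fin u)) :
    ∑ y : X u × X u, rowPsi u H q y * rowPsi u H q' y
      = if q = q' then (4*u^2 : ℝ) else 0 := by
  match q, q' with
  | Sum.inl a, Sum.inl a' =>
    rw [rowPsi, rowPsi, inner_rowOf u H hH2]
    have hterm : ∀ c : X u, (K u H a c * K u H a' c) * (if id c = id c then (2*u:ℝ) else 0)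
        = (2*u:ℝ) * (K u H a c * K u H a' c) := by
      intro c; rw [if_pos rfl]; ring
    rw [Finset.sum_congr rfl fun c _ => hterm c, ← Finset.mul_sum, Krow u H hH2]
    by_cases h : a = a' <;> simp [h] <;> ring
  | Sum.inl a, Sum.inr p =>
    rw [rowPsi, rowPsi, inner_rowOf u H hH2]
    have : ∀ c : X u, (id c = mu u p.1 c) = False := by
      intro c; simp [(mu_ne u p.1 c).symm]
    simp only [this, if_false, mul_zero, Finset.sum_const_zero]
    rw [if_neg (by simp)]
  | Sum.inr p, Sum.inl a =>
    rw [rowPsi, rowPsi, inner_rowOf u H hH2]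
    have : ∀ c : X u, (mu u p.1 c = id c) = False := by
      intro c; simp [mu_ne u p.1 c]
    simp only [this, if_false, mul_zero, Finset.sum_const_zero]
    rw [if_neg (by simp)]
  | Sum.inr ⟨s, e⟩, Sum.inr ⟨s', e'⟩ =>
    rw [rowPsi, rowPsi, inner_rowOf u H hH2]
    by_cases hs : s = s'
    · subst hs
      have hterm : ∀ c : X u, (H e (ifin u s c) * H e' (ifin u s c)) *
          (if mu u s c = mu u s c then (2*u:ℝ) else 0)
          = (2*u:ℝ) * (H e (ifin u s c) * H e' (ifin u s c)) := by
        intro c; rw [if_pos rfl]; ring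
      rw [Finset.sum_congr rfl fun c _ => hterm c, ← Finset.mul_sum, sum_H_ifin u H hH2]
      by_cases he : e = e' <;> simp [he, Prod.ext_iff] <;> ring
    · have : ∀ c : X u, (mu u s c = mu u s' c) = False := by
        intro c; simp [mu_disj u hs c]
      simp only [this, if_false, mul_zero, Finset.sum_const_zero]
      rw [if_neg (by simp [Prod.ext_iff, hs])]

lemma orth_PhiPsi (hH2 : H * H.transpose = (u : ℝ) • 1) (p : ZMod (2*u-1) × Fin u)
    (q : X u ⊕ (ZMod (2*u-1) × Fin u)) :
    ∑ y : X u × X u, rowPhi u H p y * rowPsi u H q y = 0 := by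
  obtain ⟨s, e⟩ := p
  match q with
  | Sum.inl a =>
    rw [rowPhi, rowPsi, inner_rowOf u H hH2]
    have : ∀ c : X u, (mu u s c = id c) = False := by
      intro c; simp [mu_ne u s c]
    simp only [this, if_false, mul_zero, Finset.sum_const_zero]
  | Sum.inr ⟨s', e'⟩ =>
    rw [rowPhi, rowPsi, inner_rowOf u H hH2]
    by_cases hs : s = s'
    · subst hs
      have hterm : ∀ c : X u,
          (osign u s c * H e (ifin u s c) * (H e' (ifin u s c))) *
            (if mu u s c = mu u s c then (2*u:ℝ) else 0)
          = (2*u:ℝ) * (osign u s c * (H e (ifin u s c) * H e' (ifin u s c))) := by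
        intro c; rw [if_pos rfl]; ring
      rw [Finset.sum_congr rfl fun c _ => hterm c, ← Finset.mul_sum]
      have hzero : ∑ c : X u, osign u s c * (H e (ifin u s c) * H e' (ifin u s c)) = 0 := by
        apply sum_neg_eq_zero _ (mu u s) (mu_invol u s).bijective
        intro c
        have h1 : ifin u s (mu u s c) = ifin u s c := by
          apply Fin.ext; rw [ifin_val, ifin_val, iota_mu]
        rw [h1, osign_mu]; ring
      rw [hzero, mul_zero]
    · have : ∀ c : X u, (mu u s c = mu u s' c) = False := by
        intro c; simp [mu_disj u hs c]
      simp only [this, if_false, mul_zero, Finset.sum_const_zero]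

/-! ### Eigenvector property -/

lemma eig_Phi (hH2 : H * H.transpose = (u : ℝ) • 1) (p : ZMod (2*u-1) × Fin u)
    (q : X u × X u) :
    ∑ y : X u × X u, rowPhi u H p y * Rm u H y q = (2*u : ℝ) * rowPhi u H p q := by
  simp only [rowPhi]
  rw [eig_rowOf u H hH2 _ _ (mu_invol u p.1) (-1)]
  · ring
  · intro c
    have h1 : ifin u p.1 (mu u p.1 c) = ifin u p.1 c := by
      apply Fin.ext; rw [ifin_val, ifin_val, iota_mu]
    rw [h1, osign_mu]; ring

lemma eig_Psi (hH2 : H * H.transpose = (u : ℝ) • 1) (q : X u ⊕ (ZMod (2*u-1) × Fin u))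
    (y : X u × X u) :
    ∑ z : X u × X u, rowPsi u H q z * Rm u H z y = -(2*u : ℝ) * rowPsi u H q y := by
  match q with
  | Sum.inl a =>
    simp only [rowPsi]
    rw [eig_rowOf u H hH2 _ _ (fun x => rfl) 1 (fun c => by simp)]
    ring
  | Sum.inr ⟨s, e⟩ =>
    simp only [rowPsi]
    rw [eig_rowOf u H hH2 _ _ (mu_invol u s) 1]
    · ring
    · intro c
      have h1 : ifin u s (mu u s c) = ifin u s c := by
        apply Fin.ext; rw [ifin_val, ifin_val, iota_mu]
      rw [h1]; ring


/-! ### Cardinalities -/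

lemma cardPhiI : Fintype.card (ZMod (2*u-1) × Fin u) = u * (2*u-1) := by
  rw [Fintype.card_prod, ZMod.card, Fintype.card_fin, Nat.mul_comm]

lemma cardPsiI : Fintype.card (X u ⊕ ZMod (2*u-1) × Fin u) = u * (2*u+1) := by
  have hu := u_pos u
  have h3 : u ≤ u*u := Nat.le_mul_of_pos_left u hu
  rw [Fintype.card_sum, cardX, cardPhiI]
  have h1 : u * (2*u-1) = 2*(u*u) - u := by
    rw [Nat.mul_comm, Nat.sub_mul, one_mul, Nat.mul_assoc]
  have h2 : u * (2*u+1) = 2*(u*u) + u := by ring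
  rw [h1, h2]
  generalize u * u = w at h3 ⊢
  omega

lemma cardJ : Fintype.card (X u × X u) = 4 * u^2 := by
  rw [Fintype.card_prod, cardX]; ring

lemma cardI :
    Fintype.card ((ZMod (2*u-1) × Fin u) ⊕ (X u ⊕ ZMod (2*u-1) × Fin u)) = 4 * u^2 := by
  have hu := u_pos u
  have h3 : u ≤ u*u := Nat.le_mul_of_pos_left u hu
  rw [Fintype.card_sum, cardPhiI, cardPsiI]
  have h1 : u * (2*u-1) = 2*(u*u) - u := by
    rw [Nat.mul_comm, Nat.sub_mul, one_mul, Nat.mul_assoc]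
  have h2 : u * (2*u+1) = 2*(u*u) + u := by ring
  have h4 : 4 * u^2 = 4*(u*u) := by ring
  rw [h1, h2, h4]
  generalize u * u = w at h3 ⊢
  omega

/-! ### The full Hadamard matrix -/

noncomputable def Mfull :
    Matrix ((ZMod (2*u-1) × Fin u) ⊕ (X u ⊕ ZMod (2*u-1) × Fin u)) (X u × X u) ℝ :=
  fun i y => Sum.elim (fun p => rowPhi u H p y) (fun q => rowPsi u H q y) i

lemma Mfull_pm (hH1 : ∀ i j, H i j = 1 ∨ H i j = -1) (i) (y) :
    Mfull u H i y = 1 ∨ Mfull u H i y = -1 := by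
  match i with
  | Sum.inl p => exact rowPhi_pm u H hH1 p y
  | Sum.inr q => exact rowPsi_pm u H hH1 q y

lemma Mfull_entry (hH2 : H * H.transpose = (u : ℝ) • 1) (a b) :
    ∑ y : X u × X u, Mfull u H a y * Mfull u H b y
      = if a = b then (4*u^2 : ℝ) else 0 := by
  match a, b with
  | Sum.inl p, Sum.inl p' =>
    simpa [Mfull, Sum.inl.injEq] using orth_PhiPhi u H hH2 p p'
  | Sum.inl p, Sum.inr q =>
    simpa [Mfull] using orth_PhiPsi u H hH2 p q
  | Sum.inr q, Sum.inl p =>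
    have h := orth_PhiPsi u H hH2 p q
    have h2 : ∑ y : X u × X u, rowPsi u H q y * rowPhi u H p y = 0 := by
      rw [← h]; exact Finset.sum_congr rfl fun y _ => mul_comm _ _
    simpa [Mfull] using h2
  | Sum.inr q, Sum.inr q' =>
    simpa [Mfull, Sum.inr.injEq] using orth_PsiPsi u H hH2 q q'

lemma Mfull_mul (hH2 : H * H.transpose = (u : ℝ) • 1) :
    Mfull u H * (Mfull u H)ᵀ = (4*u^2 : ℝ) • 1 := by
  ext a b
  rw [Matrix.mul_apply]
  simp only [Matrix.transpose_apply, Matrix.smul_apply, Matrix.one_apply, smul_eq_mul]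
  rw [Mfull_entry u H hH2]
  by_cases h : a = b <;> simp [h]

lemma Ncast_ne : ((4*u^2 : ℝ)) ≠ 0 := by
  have hu := u_pos u
  have : (0:ℝ) < (u:ℝ) := by exact_mod_cast hu
  positivity

lemma Scomb (hH2 : H * H.transpose = (u : ℝ) • 1) (y y' : X u × X u) :
    (∑ p : ZMod (2*u-1) × Fin u, rowPhi u H p y * rowPhi u H p y')
      + (∑ q : X u ⊕ ZMod (2*u-1) × Fin u, rowPsi u H q y * rowPsi u H q y')
      = if y = y' then (4*u^2 : ℝ) else 0 := by
  have hMM := Mfull_mul u H hH2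
  have h1 : Mfull u H * (((4*u^2:ℝ))⁻¹ • (Mfull u H)ᵀ) = 1 := by
    rw [Matrix.mul_smul, hMM, smul_smul, inv_mul_cancel₀ (Ncast_ne u), one_smul]
  have e : ((ZMod (2*u-1) × Fin u) ⊕ (X u ⊕ ZMod (2*u-1) × Fin u)) ≃ (X u × X u) :=
    Fintype.equivOfCardEq (by rw [cardI, cardJ])
  have h2 := (Matrix.mul_eq_one_comm_of_equiv e).mp h1
  have h3 : (Mfull u H)ᵀ * Mfull u H = ((4*u^2:ℝ)) • 1 := by
    have h2' : ((4*u^2:ℝ))⁻¹ • ((Mfull u H)ᵀ * Mfull u H) = 1 := by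
      rw [← Matrix.smul_mul]; exact h2
    have h2'' := congrArg (fun A => ((4*u^2:ℝ)) • A) h2'
    simp only [smul_smul] at h2''
    rw [mul_inv_cancel₀ (Ncast_ne u), one_smul] at h2''
    simpa using h2''
  have h4 := congrFun (congrFun h3 y) y'
  rw [Matrix.mul_apply] at h4
  simp only [Matrix.transpose_apply, Matrix.smul_apply, Matrix.one_apply, smul_eq_mul] at h4
  rw [Fintype.sum_sum_type] at h4
  simp only [Mfull, Sum.elim_inl, Sum.elim_inr] at h4
  rw [h4]
  by_cases h : y = y' <;> simp [h]

lemma SPhi_off (hH2 : H * H.transpose = (u : ℝ) • 1) {y y' : X u × X u} (h : y ≠ y') :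
    ∑ p : ZMod (2*u-1) × Fin u, rowPhi u H p y * rowPhi u H p y'
      = (u:ℝ) * Rm u H y y' := by
  set SP := ∑ p : ZMod (2*u-1) × Fin u, rowPhi u H p y * rowPhi u H p y' with hSP
  set SQ := ∑ q : X u ⊕ ZMod (2*u-1) × Fin u, rowPsi u H q y * rowPsi u H q y' with hSQ
  have hA : ∑ z : X u × X u,
      (∑ p : ZMod (2*u-1) × Fin u, rowPhi u H p y * rowPhi u H p z) * Rm u H z y'
      = (2*u:ℝ) * SP := by
    have step1 : ∀ z, (∑ p : ZMod (2*u-1) × Fin u, rowPhi u H p y * rowPhi u H p z) * Rm u H z y'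
        = ∑ p : ZMod (2*u-1) × Fin u, rowPhi u H p y * (rowPhi u H p z * Rm u H z y') := by
      intro z; rw [Finset.sum_mul]; exact Finset.sum_congr rfl fun p _ => by ring
    rw [Finset.sum_congr rfl fun z _ => step1 z, Finset.sum_comm]
    rw [hSP, Finset.mul_sum]
    refine Finset.sum_congr rfl fun p _ => ?_
    rw [← Finset.mul_sum, eig_Phi u H hH2 p y']
    ring
  have hB : ∑ z : X u × X u,
      (∑ q : X u ⊕ ZMod (2*u-1) × Fin u, rowPsi u H q y * rowPsi u H q z) * Rm u H z y'
      = -(2*u:ℝ) * SQ := by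
    have step1 : ∀ z, (∑ q : X u ⊕ ZMod (2*u-1) × Fin u, rowPsi u H q y * rowPsi u H q z)
          * Rm u H z y'
        = ∑ q : X u ⊕ ZMod (2*u-1) × Fin u, rowPsi u H q y * (rowPsi u H q z * Rm u H z y') := by
      intro z; rw [Finset.sum_mul]; exact Finset.sum_congr rfl fun q _ => by ring
    rw [Finset.sum_congr rfl fun z _ => step1 z, Finset.sum_comm]
    rw [hSQ, Finset.mul_sum]
    refine Finset.sum_congr rfl fun q _ => ?_
    rw [← Finset.mul_sum, eig_Psi u H hH2 q y']
    ring
  have hC : ∑ z : X u × X u, (if y = z then (4*u^2:ℝ) else 0) * Rm u H z y'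
      = (4*u^2:ℝ) * Rm u H y y' := by
    simp [ite_mul, zero_mul, Finset.sum_ite_eq]
  have hsplit : ∑ z : X u × X u, (if y = z then (4*u^2:ℝ) else 0) * Rm u H z y'
      = (2*u:ℝ) * SP + -(2*u:ℝ) * SQ := by
    rw [← hA, ← hB, ← Finset.sum_add_distrib]
    refine Finset.sum_congr rfl fun z _ => ?_
    rw [← Scomb u H hH2 y z, add_mul]
  have key : (4*u^2:ℝ) * Rm u H y y' = (2*u:ℝ) * SP + -(2*u:ℝ) * SQ := by
    rw [← hC, hsplit]
  have hzero : SP + SQ = 0 := by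
    have := Scomb u H hH2 y y'
    rw [if_neg h] at this
    exact this
  have hu : (0:ℝ) < (u:ℝ) := by exact_mod_cast u_pos u
  have h4 : (4*(u:ℝ)) ≠ 0 := by positivity
  apply mul_left_cancel₀ h4
  have hq : SQ = -SP := by linarith
  rw [hq] at key
  linear_combination -key

lemma SPsi_off (hH2 : H * H.transpose = (u : ℝ) • 1) {y y' : X u × X u} (h : y ≠ y') :
    ∑ q : X u ⊕ ZMod (2*u-1) × Fin u, rowPsi u H q y * rowPsi u H q y'
      = -(u:ℝ) * Rm u H y y' := by
  have hzero := Scomb u H hH2 y y'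
  rw [if_neg h, SPhi_off u H hH2 h] at hzero
  linarith

end Main

end KETF

open KETF in
/-- If there exists a Hadamard matrix of size `u ≥ 1`, then there exist Naimark-complementary
real flat ETFs with parameters `(d,n) = (u(2u−1), 4u²)` and `(u(2u+1), 4u²)`; in particular
both are Hadamard ETFs, i.e. each occurs as rows of a `4u² × 4u²` real Hadamard matrix. -/
theorem kirkman_hadamard_etf (u : ℕ) (hu : 1 ≤ u)
    (H : Matrix (Fin u) (Fin u) ℝ)
    (hH1 : ∀ i j, H i j = 1 ∨ H i j = -1)
    (hH2 : H * H.transpose = (u : ℝ) • 1) :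
    ∃ (Φ : Matrix (Fin (u * (2 * u - 1))) (Fin (4 * u ^ 2)) ℝ)
      (Ψ : Matrix (Fin (u * (2 * u + 1))) (Fin (4 * u ^ 2)) ℝ),
      (∀ i j, Φ i j = 1 ∨ Φ i j = -1) ∧
      (∀ i j, Ψ i j = 1 ∨ Ψ i j = -1) ∧
      Φ * Φ.transpose = ((4 * u ^ 2 : ℕ) : ℝ) • 1 ∧
      Ψ * Ψ.transpose = ((4 * u ^ 2 : ℕ) : ℝ) • 1 ∧
      Φ * Ψ.transpose = 0 ∧
      (∃ γ : ℝ, ∀ j j', j ≠ j' → |∑ i, Φ i j * Φ i j'| = γ) ∧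
      (∃ γ : ℝ, ∀ j j', j ≠ j' → |∑ i, Ψ i j * Ψ i j'| = γ) ∧
      (∃ (Hb : Matrix (Fin (4 * u ^ 2)) (Fin (4 * u ^ 2)) ℝ)
          (f : Fin (u * (2 * u - 1)) → Fin (4 * u ^ 2)),
        (∀ i j, Hb i j = 1 ∨ Hb i j = -1) ∧
        Hb * Hb.transpose = ((4 * u ^ 2 : ℕ) : ℝ) • 1 ∧
        Function.Injective f ∧ (∀ i j, Φ i j = Hb (f i) j)) ∧
      (∃ (Hb : Matrix (Fin (4 * u ^ 2)) (Fin (4 * u ^ 2)) ℝ)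
          (f : Fin (u * (2 * u + 1)) → Fin (4 * u ^ 2)),
        (∀ i j, Hb i j = 1 ∨ Hb i j = -1) ∧
        Hb * Hb.transpose = ((4 * u ^ 2 : ℕ) : ℝ) • 1 ∧
        Function.Injective f ∧ (∀ i j, Ψ i j = Hb (f i) j)) := by
  classical
  haveI : NeZero (2*u-1) := ⟨by omega⟩
  have hcast : ((4 * u ^ 2 : ℕ) : ℝ) = (4*(u:ℝ)^2) := by push_cast; ring
  let e1 : Fin (u * (2 * u - 1)) ≃ (ZMod (2*u-1) × Fin u) :=
    Fintype.equivOfCardEq (by rw [Fintype.card_fin, cardPhiI])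
  let e2 : Fin (u * (2 * u + 1)) ≃ (X u ⊕ ZMod (2*u-1) × Fin u) :=
    Fintype.equivOfCardEq (by rw [Fintype.card_fin, cardPsiI])
  let eJ : Fin (4 * u ^ 2) ≃ (X u × X u) :=
    Fintype.equivOfCardEq (by rw [Fintype.card_fin, cardJ])
  let eI : Fin (4 * u ^ 2) ≃ ((ZMod (2*u-1) × Fin u) ⊕ (X u ⊕ ZMod (2*u-1) × Fin u)) :=
    Fintype.equivOfCardEq (by rw [Fintype.card_fin, cardI])
  refine ⟨fun i j => rowPhi u H (e1 i) (eJ j), fun i j => rowPsi u H (e2 i) (eJ j),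
    fun i j => rowPhi_pm u H hH1 _ _, fun i j => rowPsi_pm u H hH1 _ _, ?_, ?_, ?_, ?_, ?_, ?_, ?_⟩
  · ext i i'
    erw [Matrix.mul_apply]
    change ∑ j : Fin (4*u^2), rowPhi u H (e1 i) (eJ j) * rowPhi u H (e1 i') (eJ j) = _
    rw [show ∑ j : Fin (4*u^2), rowPhi u H (e1 i) (eJ j) * rowPhi u H (e1 i') (eJ j)
        = ∑ y, rowPhi u H (e1 i) y * rowPhi u H (e1 i') y from Equiv.sum_comp eJ (fun y => rowPhi u H (e1 i) y * rowPhi u H (e1 i') y)]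
    rw [orth_PhiPhi u H hH2]
    by_cases h : i = i'
    · subst h; simp [Matrix.smul_apply, Matrix.one_apply, hcast]
    · have : ¬ (e1 i = e1 i') := fun hh => h (e1.injective hh)
      simp [Matrix.smul_apply, Matrix.one_apply, this, h]
  · ext i i'
    erw [Matrix.mul_apply]
    change ∑ j : Fin (4*u^2), rowPsi u H (e2 i) (eJ j) * rowPsi u H (e2 i') (eJ j) = _
    rw [show ∑ j : Fin (4*u^2), rowPsi u H (e2 i) (eJ j) * rowPsi u H (e2 i') (eJ j)
        = ∑ y, rowPsi u H (e2 i) y * rowPsi u H (e2 i') y from Equiv.sum_comp eJ (fun y => rowPsi u H (e2 i) y * rowPsi u H (e2 i') y)]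
    rw [orth_PsiPsi u H hH2]
    by_cases h : i = i'
    · subst h; simp [Matrix.smul_apply, Matrix.one_apply, hcast]
    · have : ¬ (e2 i = e2 i') := fun hh => h (e2.injective hh)
      simp [Matrix.smul_apply, Matrix.one_apply, this, h]
  · ext i i'
    erw [Matrix.mul_apply]
    change ∑ j : Fin (4*u^2), rowPhi u H (e1 i) (eJ j) * rowPsi u H (e2 i') (eJ j) = _
    rw [show ∑ j : Fin (4*u^2), rowPhi u H (e1 i) (eJ j) * rowPsi u H (e2 i') (eJ j)
        = ∑ y, rowPhi u H (e1 i) y * rowPsi u H (e2 i') y from Equiv.sum_comp eJ (fun y => rowPhi u H (e1 i) y * rowPsi u H (e2 i') y)]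
    rw [orth_PhiPsi u H hH2]
    simp
  · refine ⟨(u:ℝ), fun j j' hjj => ?_⟩
    have hne : eJ j ≠ eJ j' := fun hh => hjj (eJ.injective hh)
    rw [show ∑ i, rowPhi u H (e1 i) (eJ j) * rowPhi u H (e1 i) (eJ j')
        = ∑ p, rowPhi u H p (eJ j) * rowPhi u H p (eJ j') from Equiv.sum_comp e1 (fun p => rowPhi u H p (eJ j) * rowPhi u H p (eJ j'))]
    rw [SPhi_off u H hH2 hne]
    rcases Rm_pm u H hH1 (eJ j) (eJ j') with h | h <;> rw [h] <;>
      simp [abs_of_nonneg, Nat.abs_cast]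
  · refine ⟨(u:ℝ), fun j j' hjj => ?_⟩
    have hne : eJ j ≠ eJ j' := fun hh => hjj (eJ.injective hh)
    rw [show ∑ i, rowPsi u H (e2 i) (eJ j) * rowPsi u H (e2 i) (eJ j')
        = ∑ q, rowPsi u H q (eJ j) * rowPsi u H q (eJ j') from Equiv.sum_comp e2 (fun q => rowPsi u H q (eJ j) * rowPsi u H q (eJ j'))]
    rw [SPsi_off u H hH2 hne]
    rcases Rm_pm u H hH1 (eJ j) (eJ j') with h | h <;> rw [h] <;>
      simp [abs_of_nonneg, Nat.abs_cast]
  · refine ⟨fun i j => Mfull u H (eI i) (eJ j), fun i => eI.symm (Sum.inl (e1 i)),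
      fun i j => Mfull_pm u H hH1 _ _, ?_, ?_, ?_⟩
    · ext i i'
      erw [Matrix.mul_apply]
      change ∑ j : Fin (4*u^2), Mfull u H (eI i) (eJ j) * Mfull u H (eI i') (eJ j) = _
      rw [show ∑ j : Fin (4*u^2), Mfull u H (eI i) (eJ j) * Mfull u H (eI i') (eJ j)
          = ∑ y, Mfull u H (eI i) y * Mfull u H (eI i') y from Equiv.sum_comp eJ (fun y => Mfull u H (eI i) y * Mfull u H (eI i') y)]
      rw [Mfull_entry u H hH2]
      by_cases h : i = i'
      · subst h; simp [Matrix.smul_apply, Matrix.one_apply, hcast]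
      · have : ¬ (eI i = eI i') := fun hh => h (eI.injective hh)
        simp [Matrix.smul_apply, Matrix.one_apply, this, h]
    · intro a b hab
      exact e1.injective (Sum.inl_injective (eI.symm.injective hab))
    · intro i j
      simp [Mfull, Equiv.apply_symm_apply]
  · refine ⟨fun i j => Mfull u H (eI i) (eJ j), fun i => eI.symm (Sum.inr (e2 i)),
      fun i j => Mfull_pm u H hH1 _ _, ?_, ?_, ?_⟩
    · ext i i'
      erw [Matrix.mul_apply]
      change ∑ j : Fin (4*u^2), Mfull u H (eI i) (eJ j) * Mfull u H (eI i') (eJ j) = _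
      rw [show ∑ j : Fin (4*u^2), Mfull u H (eI i) (eJ j) * Mfull u H (eI i') (eJ j)
          = ∑ y, Mfull u H (eI i) y * Mfull u H (eI i') y from Equiv.sum_comp eJ (fun y => Mfull u H (eI i) y * Mfull u H (eI i') y)]
      rw [Mfull_entry u H hH2]
      by_cases h : i = i'
      · subst h; simp [Matrix.smul_apply, Matrix.one_apply, hcast]
      · have : ¬ (eI i = eI i') := fun hh => h (eI.injective hh)
        simp [Matrix.smul_apply, Matrix.one_apply, this, h]
    · intro a b hab
      exact e2.injective (Sum.inr_injective (eI.symm.injective hab))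
    · intro i j
      simp [Mfull, Equiv.apply_symm_apply]
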